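/- Taller versus shorter pretrained networks (Corollary 14): Fix d_0, d_L, γ, w, α, N, B > 0 with L_s, L_t integers, L_s ≥ 3, and δ_st > 0. Let the shorter network have constant hidden-layer width d_s > 0 and the taller one width d_t = d_s/(1+δ_st). Define Bound(L, d) = d_L/N + (1/B) [ 13 d d_L γ²/256 + (α γ w/4) ( d² d_L + d² d_0 + (L−3) d³ ) ]. Set e^m_1 = (γw/4) d_0 d_s², e^m_2 = (γw/4) d_s³, e^m_{L−1} = (γw/4) d_s² d_L, e^m_L = 13 d_s d_L γ²/256, and Δ = δ_st (1+δ_st)² ( (e^m_1 + e^m_{L−1})/e^m_2 + e^m_L/(α e^m_2) ). If L_s < L_t and L_t ≤ L_s + 3 δ_st (L_s − 3) + Δ, then Bound(L_t, d_t) ≤ Bound(L_s, d_s); i.e., the taller network achieves an expected-gradient decay bound no worse than the shorter one. -/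
import Mathlib


set_option maxHeartbeats 1000000 in
/-- **Taller versus shorter pretrained networks (Corollary 14).**
With `Bound(L, d) = d_L/N + (1/B)[13 d d_L γ²/256 + (αγw/4)(d² d_L + d² d_0 + (L−3)d³)]`,
if `L_s < L_t ≤ L_s + 3 δ_st (L_s − 3) + Δ` where the taller network has hidden
width `d_t = d_s/(1+δ_st)`, then `Bound(L_t, d_t) ≤ Bound(L_s, d_s)`. -/
theorem taller_vs_shorter_pretrained
    (d0 dL γ w α N B : ℝ)
    (hd0 : 0 < d0) (hdL : 0 < dL) (hγ : 0 < γ) (hw : 0 < w) (hα : 0 < α)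
    (hN : 0 < N) (hB : 0 < B)
    (Ls Lt : ℕ) (hLs : 3 ≤ Ls)
    (δst : ℝ) (hδst : 0 < δst)
    (ds dt : ℝ) (hds : 0 < ds) (hdt : dt = ds / (1 + δst))
    (Bound : ℕ → ℝ → ℝ)
    (hBound : ∀ (L : ℕ) (dd : ℝ), Bound L dd = dL / N + (1 / B) *
      (13 * dd * dL * γ ^ 2 / 256 +
        (α * γ * w / 4) * (dd ^ 2 * dL + dd ^ 2 * d0 + ((L : ℝ) - 3) * dd ^ 3)))
    (em1 em2 emLm1 emL Δ : ℝ)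
    (hem1 : em1 = (γ * w / 4) * d0 * ds ^ 2)
    (hem2 : em2 = (γ * w / 4) * ds ^ 3)
    (hemLm1 : emLm1 = (γ * w / 4) * ds ^ 2 * dL)
    (hemL : emL = 13 * ds * dL * γ ^ 2 / 256)
    (hΔ : Δ = δst * (1 + δst) ^ 2 * ((em1 + emLm1) / em2 + emL / (α * em2)))
    (h1 : Ls < Lt)
    (h2 : (Lt : ℝ) ≤ (Ls : ℝ) + 3 * δst * ((Ls : ℝ) - 3) + Δ) :
    Bound Lt dt ≤ Bound Ls ds := by
  have hk : (0:ℝ) < 1 + δst := by linarith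
  have hdt0 : 0 < dt := by rw [hdt]; positivity
  have hLs3 : (3:ℝ) ≤ (Ls:ℝ) := by exact_mod_cast hLs
  have hΔ' : Δ = δst * (1 + δst)^2 * ((d0 + dL)/ds + (13 * dL * γ) / (64 * α * w * ds^2)) := by
    rw [hΔ, hem1, hem2, hemLm1, hemL]
    field_simp
    ring
  have key : 13 * dt * dL * γ ^ 2 / 256 +
      (α * γ * w / 4) * (dt ^ 2 * dL + dt ^ 2 * d0 + ((Lt : ℝ) - 3) * dt ^ 3) ≤
      13 * ds * dL * γ ^ 2 / 256 +
      (α * γ * w / 4) * (ds ^ 2 * dL + ds ^ 2 * d0 + ((Ls : ℝ) - 3) * ds ^ 3) := by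
    have hLt3 : ((Lt:ℝ) - 3) ≤ (1 + 3*δst)*((Ls:ℝ) - 3) + Δ := by linarith
    have step1 : ((Lt:ℝ) - 3) * dt^3 ≤ ((1 + 3*δst)*((Ls:ℝ)-3) + Δ) * dt^3 :=
      mul_le_mul_of_nonneg_right hLt3 (by positivity)
    have step2 : (1 + 3*δst)*((Ls:ℝ)-3) * dt^3 ≤ ((Ls:ℝ)-3) * ds^3 := by
      rw [hdt, div_pow, ← mul_div_assoc, div_le_iff₀ (by positivity)]
      nlinarith [mul_nonneg (mul_nonneg (sub_nonneg.2 hLs3) (pow_pos hds 3).le)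
        (show (0:ℝ) ≤ 3*δst^2 + δst^3 by positivity)]
    have step4 : 13 * dt * dL * γ ^ 2 / 256 +
        (α * γ * w / 4) * (dt ^ 2 * dL + dt ^ 2 * d0 + Δ * dt ^ 3) ≤
        13 * ds * dL * γ ^ 2 / 256 +
        (α * γ * w / 4) * (ds ^ 2 * dL + ds ^ 2 * d0) := by
      have expand : (13 * ds * dL * γ ^ 2 / 256 +
            (α * γ * w / 4) * (ds ^ 2 * dL + ds ^ 2 * d0)) -
          (13 * dt * dL * γ ^ 2 / 256 +
            (α * γ * w / 4) * (dt ^ 2 * dL + dt ^ 2 * d0 + Δ * dt ^ 3)) =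
          (α * γ * w / 4) * (dL + d0) * ds ^ 2 * δst / (1 + δst) ^ 2 := by
        rw [hdt, hΔ']
        field_simp
        ring
      have pos : (0:ℝ) ≤ (α * γ * w / 4) * (dL + d0) * ds ^ 2 * δst / (1 + δst) ^ 2 := by positivity
      linarith [expand, pos]
    nlinarith [mul_le_mul_of_nonneg_left step1 (le_of_lt (show (0:ℝ) < α*γ*w/4 by positivity)),
      mul_le_mul_of_nonneg_left step2 (le_of_lt (show (0:ℝ) < α*γ*w/4 by positivity))]
  rw [hBound, hBound]
  gcongr
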